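/- arXiv:2207.07234 — 3 statements merged into one kernel-verified Lean document; each statement's English description precedes it below -/
import Mathlib

section
/- Let A and K be real N×N matrices with K symmetric positive definite. If ν is a nonzero eigenvalue of A^T K^{-1} A and σ, τ > 0 are real numbers, then the block matrix M = [[I - 2στ A^T K^{-1} A, -σ A^T],[τ K^{-1} A, I]] has the property that λ = (1 - στν) ± i·(στν - (στν)²)^{1/2} are eigenvalues of M whenever 0 < στν < 1. -/
open Matrix

/-- If ν is a nonzero eigenvalue of AᵀK⁻¹A (K symmetric positive definite) and
σ, τ > 0 with 0 < στν < 1, then λ = (1-στν) ± i(στν-(στν)²)^{1/2} are (complex)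
eigenvalues of the block matrix M = [[I - 2στ AᵀK⁻¹A, -σAᵀ],[τK⁻¹A, I]]. -/
theorem stmt_0 {N : ℕ} (A K : Matrix (Fin N) (Fin N) ℝ) (hK : K.PosDef)
    (ν σ τ : ℝ) (hν : ν ≠ 0)
    (hνeig : ∃ v : Fin N → ℝ, v ≠ 0 ∧ (Aᵀ * K⁻¹ * A).mulVec v = ν • v)
    (hσ : 0 < σ) (hτ : 0 < τ) (h0 : 0 < σ * τ * ν) (h1 : σ * τ * ν < 1) :
    let M : Matrix (Fin N ⊕ Fin N) (Fin N ⊕ Fin N) ℝ :=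
      Matrix.fromBlocks (1 - (2 * σ * τ) • (Aᵀ * K⁻¹ * A)) (-(σ • Aᵀ)) (τ • (K⁻¹ * A)) 1
    let Mc : Matrix (Fin N ⊕ Fin N) (Fin N ⊕ Fin N) ℂ := M.map (Complex.ofReal)
    let s : ℝ := Real.sqrt (σ * τ * ν - (σ * τ * ν) ^ 2)
    ((Mc - ((1 - σ * τ * ν : ℝ) + Complex.I * (s : ℝ)) • 1).det = 0 ∧
     (Mc - ((1 - σ * τ * ν : ℝ) - Complex.I * (s : ℝ)) • 1).det = 0) := by
  intro M Mc s
  obtain ⟨v, hv0, hBv⟩ := hνeig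
  set μ : ℝ := σ * τ * ν with hμ
  -- real setup
  set B : Matrix (Fin N) (Fin N) ℝ := Aᵀ * K⁻¹ * A with hB
  set W : Matrix (Fin N) (Fin N) ℝ := K⁻¹ * A with hW
  set w : Fin N → ℝ := W.mulVec v with hw
  have hAw : Aᵀ.mulVec w = ν • v := by
    rw [hw, Matrix.mulVec_mulVec, ← Matrix.mul_assoc, ← hB, hBv]
  have hwne : w ≠ 0 := by
    intro h
    apply hv0
    have : Aᵀ.mulVec w = 0 := by rw [h, Matrix.mulVec_zero]
    rw [hAw] at this
    exact (smul_eq_zero.mp this).resolve_left hν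
  -- complexification
  set f : ℝ →+* ℂ := Complex.ofRealHom with hf
  set vc : Fin N → ℂ := fun i => (v i : ℂ) with hvc
  set wc : Fin N → ℂ := fun i => (w i : ℂ) with hwc
  have hBvc : (B.map f).mulVec vc = (ν : ℂ) • vc := by
    funext i
    rw [show vc = f ∘ v from rfl, ← RingHom.map_mulVec, hBv]
    simp [hf]
  have hWvc : (W.map f).mulVec vc = wc := by
    funext i
    rw [show vc = f ∘ v from rfl, ← RingHom.map_mulVec]
    rfl
  have hAwc : (Aᵀ.map f).mulVec wc = (ν : ℂ) • vc := by
    funext i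
    rw [show wc = f ∘ w from rfl, ← RingHom.map_mulVec, hAw]
    simp [hf, hvc]
  have hwcne : wc ≠ 0 := by
    intro h
    apply hwne
    funext i
    have := congrFun h i
    simpa [hwc, Complex.ofReal_eq_zero] using this
  -- block structure of Mc
  have hMc : Mc = Matrix.fromBlocks (1 - ((2 * σ * τ : ℝ) : ℂ) • B.map f)
      (-( ((σ : ℝ) : ℂ) • Aᵀ.map f)) (((τ : ℝ) : ℂ) • W.map f) 1 := by
    show M.map f = _
    rw [show M = Matrix.fromBlocks (1 - (2 * σ * τ) • B) (-(σ • Aᵀ)) (τ • W) 1 from rfl,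
      Matrix.fromBlocks_map]
    have e1 : (1 - (2 * σ * τ) • B).map ⇑f = 1 - ((2 * σ * τ : ℝ) : ℂ) • B.map ⇑f := by
      ext i j
      by_cases h : i = j <;> simp [hf, Matrix.one_apply, h, smul_eq_mul] <;> push_cast <;> ring
    have e2 : (-(σ • Aᵀ)).map ⇑f = -(((σ : ℝ) : ℂ) • Aᵀ.map ⇑f) := by
      ext i j; simp [hf, smul_eq_mul]
    have e3 : (τ • W).map ⇑f = ((τ : ℝ) : ℂ) • W.map ⇑f := by
      ext i j; simp [hf, smul_eq_mul]
    have e4 : (1 : Matrix (Fin N) (Fin N) ℝ).map ⇑f = 1 := by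
      ext i j; by_cases h : i = j <;> simp [hf, Matrix.one_apply, h]
    rw [e1, e2, e3, e4]
  -- key lemma
  have key : ∀ l : ℂ, (l - 1) * (1 - 2 * (μ : ℂ) - l) = (μ : ℂ) →
      (Mc - l • 1).det = 0 := by
    intro l hl
    rw [← Matrix.exists_mulVec_eq_zero_iff]
    refine ⟨Sum.elim ((l - 1) • vc) ((τ : ℂ) • wc), ?_, ?_⟩
    · intro h
      obtain ⟨i, hi⟩ := Function.ne_iff.mp hwcne
      have := congrFun h (Sum.inr i)
      simp at this
      rcases this with h' | h'
      · exact hτ.ne' h'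
      · exact hi h'
    · rw [Matrix.sub_mulVec, Matrix.smul_mulVec, Matrix.one_mulVec, hMc,
        Matrix.fromBlocks_mulVec]
      simp only [Sum.elim_comp_inl, Sum.elim_comp_inr]
      have htop : (1 - ((2 * σ * τ : ℝ) : ℂ) • B.map f) *ᵥ ((l - 1) • vc) +
          (-(((σ : ℝ) : ℂ) • Aᵀ.map f)) *ᵥ ((τ : ℂ) • wc) = l • ((l - 1) • vc) := by
        rw [Matrix.sub_mulVec, Matrix.one_mulVec, Matrix.smul_mulVec,
          Matrix.mulVec_smul, hBvc, Matrix.neg_mulVec, Matrix.smul_mulVec,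
          Matrix.mulVec_smul, hAwc]
        funext i
        simp only [Pi.add_apply, Pi.sub_apply, Pi.smul_apply, Pi.neg_apply, smul_eq_mul]
        have : ((2 * σ * τ : ℝ) : ℂ) * (ν : ℂ) = 2 * (μ : ℂ) := by push_cast [hμ]; ring
        have hστ : ((σ : ℝ) : ℂ) * ((τ : ℂ) * ((ν : ℂ))) = (μ : ℂ) := by
          push_cast [hμ]; ring
        linear_combination (vc i) * hl - (vc i) * this * (l - 1) - (vc i) * hστ
      have hbot : (((τ : ℝ) : ℂ) • W.map f) *ᵥ ((l - 1) • vc) + 1 *ᵥ ((τ : ℂ) • wc) =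
          l • ((τ : ℂ) • wc) := by
        rw [Matrix.smul_mulVec, Matrix.mulVec_smul, hWvc, Matrix.one_mulVec]
        funext i
        simp only [Pi.add_apply, Pi.smul_apply, smul_eq_mul]
        ring
      rw [htop, hbot]
      funext i
      cases i <;> simp
  have hs2 : (s : ℝ) ^ 2 = μ - μ ^ 2 := by
    rw [show s = Real.sqrt (μ - μ ^ 2) from rfl]
    rw [Real.sq_sqrt]
    nlinarith
  constructor
  · apply key
    have hI : (Complex.I) ^ 2 = -1 := Complex.I_sq
    have hsc : ((s : ℝ) : ℂ) ^ 2 = (μ : ℂ) - (μ : ℂ) ^ 2 := by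
      rw [← Complex.ofReal_pow, hs2]; push_cast; ring
    push_cast
    linear_combination (-(Complex.I ^ 2)) * hsc - ((μ:ℂ) - (μ:ℂ)^2) * hI
  · apply key
    have hI : (Complex.I) ^ 2 = -1 := Complex.I_sq
    have hsc : ((s : ℝ) : ℂ) ^ 2 = (μ : ℂ) - (μ : ℂ) ^ 2 := by
      rw [← Complex.ofReal_pow, hs2]; push_cast; ring
    push_cast
    linear_combination (-(Complex.I ^ 2)) * hsc - ((μ:ℂ) - (μ:ℂ)^2) * hI
end

section
/- Let A, K : ℝ^N → ℝ^N be linear maps with A invertible and K symmetric positive definite, and let c ∈ ℝ^N with u* the unique solution of A u = c. Suppose σ, τ > 0 satisfy στ·‖A^T K^{-1} A‖ < 1. Define the iteration: φ^{n+1} = φ^n + τ K^{-1}(A u^n − c), u^{n+1} = u^n − σ A^T φ^n − 2στ A^T K^{-1}(A u^n − c). Then for any initial data (u^0, φ^0), the sequence A u^n converges to A u* = c as n → ∞. -/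
open Matrix Filter Topology

/-- Scalar 2D system analysis: if `0 < ν < 1` and
`a' = a - b - 2νa`, `b' = b + νa`, then `a, b → 0`. -/
lemma stmt_2_aux (ν : ℝ) (hν0 : 0 < ν) (hν1 : ν < 1) (a b : ℕ → ℝ)
    (ha : ∀ n, a (n + 1) = a n - b n - 2 * ν * a n)
    (hb : ∀ n, b (n + 1) = b n + ν * a n) :
    Tendsto a atTop (𝓝 0) ∧ Tendsto b atTop (𝓝 0) := by
  set W : ℕ → ℝ := fun n => ν * (a n)^2 + 2 * ν * (a n) * (b n) + (b n)^2 with hW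
  have hWrec : ∀ n, W (n + 1) = (1 - ν) * W n := by
    intro n
    show ν * (a (n+1))^2 + 2 * ν * (a (n+1)) * (b (n+1)) + (b (n+1))^2
      = (1 - ν) * (ν * (a n)^2 + 2 * ν * (a n) * (b n) + (b n)^2)
    rw [ha n, hb n]; ring
  have hWn : ∀ n, W n = (1 - ν)^n * W 0 := by
    intro n
    induction n with
    | zero => simp
    | succ n ih => rw [hWrec n, ih]; ring
  have hWlim : Tendsto W atTop (𝓝 0) := by
    have h1 : (0:ℝ) ≤ 1 - ν := by linarith
    have h2 : 1 - ν < 1 := by linarith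
    have := (tendsto_pow_atTop_nhds_zero_of_lt_one h1 h2).mul_const (W 0)
    rw [zero_mul] at this
    exact this.congr fun n => (hWn n).symm
  have hWa : ∀ n, ν * (a n + b n)^2 ≤ W n := by
    intro n; show _ ≤ ν * (a n)^2 + 2 * ν * (a n) * (b n) + (b n)^2
    nlinarith [sq_nonneg (b n)]
  have hWb : ∀ n, (1 - ν) * (b n)^2 ≤ W n := by
    intro n; show _ ≤ ν * (a n)^2 + 2 * ν * (a n) * (b n) + (b n)^2
    nlinarith [sq_nonneg (a n + b n)]
  have habl : Tendsto (fun n => a n + b n) atTop (𝓝 0) := by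
    rw [tendsto_zero_iff_abs_tendsto_zero]
    have hsq : Tendsto (fun n => (a n + b n)^2) atTop (𝓝 0) := by
      apply squeeze_zero (fun n => sq_nonneg _) (g := fun n => ν⁻¹ * W n)
      · intro n
        rw [inv_mul_eq_div, le_div_iff₀ hν0]
        linarith [hWa n]
      · simpa using hWlim.const_mul ν⁻¹
    have := hsq.sqrt
    rw [Real.sqrt_zero] at this
    simpa only [Real.sqrt_sq_eq_abs, Function.comp_def] using this
  have hbl : Tendsto b atTop (𝓝 0) := by
    rw [tendsto_zero_iff_abs_tendsto_zero]
    have hsq : Tendsto (fun n => (b n)^2) atTop (𝓝 0) := by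
      apply squeeze_zero (fun n => sq_nonneg _) (g := fun n => (1 - ν)⁻¹ * W n)
      · intro n
        rw [inv_mul_eq_div, le_div_iff₀ (by linarith : (0:ℝ) < 1 - ν)]
        linarith [hWb n]
      · simpa using hWlim.const_mul (1 - ν)⁻¹
    have := hsq.sqrt
    rw [Real.sqrt_zero] at this
    simpa only [Real.sqrt_sq_eq_abs, Function.comp_def] using this
  refine ⟨?_, hbl⟩
  have := habl.sub hbl
  simpa using this

/-- PDHG iteration for linear Au = c: if στ‖AᵀK⁻¹A‖ < 1 (A invertible, K SPD),
then for any initial data the sequence A uⁿ converges to A u* = c. -/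
theorem stmt_2 {N : ℕ} (A K : Matrix (Fin N) (Fin N) ℝ)
    (hA : IsUnit A.det) (hK : K.PosDef) (c : Fin N → ℝ)
    (σ τ : ℝ) (hσ : 0 < σ) (hτ : 0 < τ)
    (hnorm : σ * τ *
      ‖LinearMap.toContinuousLinearMap (Matrix.toEuclideanLin (Aᵀ * K⁻¹ * A))‖ < 1)
    (u φ : ℕ → Fin N → ℝ)
    (hφ : ∀ n, φ (n + 1) = φ n + τ • (K⁻¹.mulVec (A.mulVec (u n) - c)))
    (hu : ∀ n, u (n + 1) = u n - σ • (Aᵀ.mulVec (φ n))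
      - (2 * σ * τ) • (Aᵀ.mulVec (K⁻¹.mulVec (A.mulVec (u n) - c)))) :
    A.mulVec (A⁻¹.mulVec c) = c ∧
    Tendsto (fun n => A.mulVec (u n)) atTop (𝓝 (A.mulVec (A⁻¹.mulVec c))) := by
  classical
  have hAinv : A * A⁻¹ = 1 := Matrix.mul_nonsing_inv A hA
  have hAinv' : A⁻¹ * A = 1 := Matrix.nonsing_inv_mul A hA
  have hc : A.mulVec (A⁻¹.mulVec c) = c := by
    rw [Matrix.mulVec_mulVec, hAinv, Matrix.one_mulVec]
  refine ⟨hc, ?_⟩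
  rw [hc]
  -- the matrix G = AᵀK⁻¹A is symmetric positive definite
  have hJ : (K⁻¹).PosDef := hK.inv
  have hJt : (K⁻¹)ᵀ = K⁻¹ := by
    rw [← Matrix.conjTranspose_eq_transpose_of_trivial, hJ.isHermitian.eq]
  set G : Matrix (Fin N) (Fin N) ℝ := Aᵀ * K⁻¹ * A with hGdef
  have hGt : Gᵀ = G := by
    rw [hGdef, Matrix.transpose_mul, Matrix.transpose_mul, Matrix.transpose_transpose,
      hJt, Matrix.mul_assoc]
  have hGmv : ∀ x : Fin N → ℝ, G.mulVec x = Aᵀ.mulVec ((K⁻¹).mulVec (A.mulVec x)) := by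
    intro x
    rw [hGdef, Matrix.mul_assoc, ← Matrix.mulVec_mulVec, ← Matrix.mulVec_mulVec]
  have hAxne : ∀ x : Fin N → ℝ, x ≠ 0 → A.mulVec x ≠ 0 := by
    intro x hx h
    apply hx
    have : A⁻¹.mulVec (A.mulVec x) = 0 := by rw [h, Matrix.mulVec_zero]
    rwa [Matrix.mulVec_mulVec, hAinv', Matrix.one_mulVec] at this
  have hGpd : G.PosDef := by
    refine Matrix.PosDef.of_dotProduct_mulVec_pos ?_ ?_
    · show Gᴴ = G
      rw [Matrix.conjTranspose_eq_transpose_of_trivial, hGt]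
    · intro x hx
      rw [hGmv x, star_trivial, Matrix.dotProduct_mulVec, Matrix.vecMul_transpose]
      have := hJ.dotProduct_mulVec_pos (hAxne x hx)
      rwa [star_trivial] at this
  -- the scaled matrix C
  set C : Matrix (Fin N) (Fin N) ℝ := (σ * τ) • G with hCdef
  have hστ : 0 < σ * τ := mul_pos hσ hτ
  have hCt : Cᵀ = C := by rw [hCdef, Matrix.transpose_smul, hGt]
  have hCpd : C.PosDef := by
    refine Matrix.PosDef.of_dotProduct_mulVec_pos ?_ ?_
    · show Cᴴ = C
      rw [Matrix.conjTranspose_eq_transpose_of_trivial, hCt]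
    · intro x hx
      rw [hCdef, Matrix.smul_mulVec, dotProduct_smul, smul_eq_mul]
      exact mul_pos hστ (by simpa [star_trivial] using hGpd.dotProduct_mulVec_pos hx)
  set ν : Fin N → ℝ := hCpd.isHermitian.eigenvalues with hνdef
  set v := hCpd.isHermitian.eigenvectorBasis with hvdef
  have hν0 : ∀ i, 0 < ν i := fun i => hCpd.eigenvalues_pos i
  -- eigenvalue upper bound
  have hν1 : ∀ i, ν i < 1 := by
    intro i
    have hmv : C *ᵥ ⇑(v i) = ν i • ⇑(v i) := hCpd.isHermitian.mulVec_eigenvectorBasis i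
    have hvi : ‖v i‖ = 1 := v.orthonormal.1 i
    have happ : Matrix.toEuclideanLin C (v i) = ν i • (v i) := by
      apply (WithLp.equiv 2 (Fin N → ℝ)).injective
      simpa [Matrix.ofLp_toEuclideanLin_apply] using hmv
    have hsmul : Matrix.toEuclideanLin C = (σ * τ) • Matrix.toEuclideanLin G := by
      rw [hCdef]
      exact (Matrix.toEuclideanLin (𝕜 := ℝ)
        (m := Fin N) (n := Fin N)).map_smul (σ * τ) G
    have hle : ‖Matrix.toEuclideanLin C (v i)‖ ≤
        (σ * τ) * ‖LinearMap.toContinuousLinearMap (Matrix.toEuclideanLin G)‖ := by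
      have h2 : Matrix.toEuclideanLin C (v i)
          = (σ * τ) • (Matrix.toEuclideanLin G (v i)) := by rw [hsmul]; rfl
      rw [h2, norm_smul, Real.norm_eq_abs, abs_of_pos hστ]
      have h3 := (LinearMap.toContinuousLinearMap (Matrix.toEuclideanLin G)).le_opNorm (v i)
      rw [LinearMap.coe_toContinuousLinearMap'] at h3
      rw [hvi, mul_one] at h3
      exact mul_le_mul_of_nonneg_left h3 hστ.le
    rw [happ, norm_smul, hvi, mul_one, Real.norm_eq_abs] at hle
    calc ν i ≤ |ν i| := le_abs_self _
    _ ≤ σ * τ * ‖LinearMap.toContinuousLinearMap (Matrix.toEuclideanLin G)‖ := hle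
    _ < 1 := hnorm
  -- shifted variables
  set z : ℕ → Fin N → ℝ := fun n => u n - A⁻¹.mulVec c with hzdef
  set p : ℕ → Fin N → ℝ := fun n => σ • Aᵀ.mulVec (φ n) with hpdef
  have hAz : ∀ n, A.mulVec (z n) = A.mulVec (u n) - c := by
    intro n
    show A.mulVec (u n - A⁻¹.mulVec c) = _
    rw [Matrix.mulVec_sub, hc]
  have hGz : ∀ n, Aᵀ.mulVec ((K⁻¹).mulVec (A.mulVec (u n) - c)) = G.mulVec (z n) := by
    intro n
    rw [← hAz, hGmv]
  have hp : ∀ n, p (n + 1) = p n + C.mulVec (z n) := by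
    intro n
    show σ • Aᵀ.mulVec (φ (n + 1)) = σ • Aᵀ.mulVec (φ n) + C.mulVec (z n)
    rw [hφ n, Matrix.mulVec_add, smul_add]
    congr 1
    rw [Matrix.mulVec_smul, hGz n, hCdef, Matrix.smul_mulVec, smul_smul]
  have hz : ∀ n, z (n + 1) = z n - p n - (2 : ℝ) • C.mulVec (z n) := by
    intro n
    show u (n + 1) - A⁻¹.mulVec c
      = (u n - A⁻¹.mulVec c) - σ • Aᵀ.mulVec (φ n) - (2 : ℝ) • C.mulVec (z n)
    rw [hu n, hGz n, hCdef, Matrix.smul_mulVec, smul_smul,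
      (by ring : (2 : ℝ) * (σ * τ) = 2 * σ * τ)]
    abel
  -- symmetry of C as a bilinear relation
  have hsym : ∀ w x : Fin N → ℝ, w ⬝ᵥ C.mulVec x = (C.mulVec w) ⬝ᵥ x := by
    intro w x
    rw [Matrix.dotProduct_mulVec]
    conv_lhs => rw [← hCt]
    rw [Matrix.vecMul_transpose]
  -- per-eigencoordinate convergence
  have key : ∀ i, Tendsto (fun n => ⇑(v i) ⬝ᵥ z n) atTop (𝓝 0) := by
    intro i
    have hmv : C *ᵥ ⇑(v i) = ν i • ⇑(v i) := hCpd.isHermitian.mulVec_eigenvectorBasis i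
    have hCsa : ∀ x : Fin N → ℝ, ⇑(v i) ⬝ᵥ C.mulVec x = ν i * (⇑(v i) ⬝ᵥ x) := by
      intro x
      rw [hsym, hmv, smul_dotProduct, smul_eq_mul]
    refine (stmt_2_aux (ν i) (hν0 i) (hν1 i)
      (fun n => ⇑(v i) ⬝ᵥ z n) (fun n => ⇑(v i) ⬝ᵥ p n) ?_ ?_).1
    · intro n
      have hsm : ⇑(v i) ⬝ᵥ ((2:ℝ) • C.mulVec (z n)) = 2 * (ν i * (⇑(v i) ⬝ᵥ z n)) := by
        rw [dotProduct_smul, hCsa, smul_eq_mul]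
      show ⇑(v i) ⬝ᵥ z (n + 1)
        = ⇑(v i) ⬝ᵥ z n - ⇑(v i) ⬝ᵥ p n - 2 * ν i * (⇑(v i) ⬝ᵥ z n)
      rw [hz n, dotProduct_sub, dotProduct_sub, hsm]
      ring
    · intro n
      show ⇑(v i) ⬝ᵥ p (n + 1) = ⇑(v i) ⬝ᵥ p n + ν i * (⇑(v i) ⬝ᵥ z n)
      rw [hp n, dotProduct_add, hCsa]
  -- reconstruct z from eigencoordinates
  have hrepr : ∀ n, (WithLp.equiv 2 (Fin N → ℝ)).symm (z n)
      = ∑ i, (⇑(v i) ⬝ᵥ z n) • v i := by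
    intro n
    rw [← v.sum_repr' ((WithLp.equiv 2 (Fin N → ℝ)).symm (z n))]
    refine Finset.sum_congr rfl fun i _ => ?_
    congr 1
    rw [EuclideanSpace.inner_eq_star_dotProduct, dotProduct_comm]
    rfl
  have hzElim : Tendsto (fun n => (WithLp.equiv 2 (Fin N → ℝ)).symm (z n)) atTop
      (𝓝 (0 : EuclideanSpace ℝ (Fin N))) := by
    have h : Tendsto (fun n => ∑ i, (⇑(v i) ⬝ᵥ z n) • v i) atTop
        (𝓝 (∑ i : Fin N, (0:ℝ) • v i)) := by
      apply tendsto_finset_sum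
      intro i _
      exact (key i).smul_const (v i)
    simp only [zero_smul, Finset.sum_const_zero] at h
    simpa only [← hrepr] using h
  have hzlim : Tendsto z atTop (𝓝 0) := by
    have hcont := (PiLp.continuousLinearEquiv 2 ℝ (fun _ : Fin N => ℝ)).continuous
    have h := (hcont.tendsto 0).comp hzElim
    rw [map_zero] at h
    exact h
  -- conclude
  have hmvc : Continuous (fun x : Fin N → ℝ => A.mulVec x) :=
    A.mulVecLin.continuous_of_finiteDimensional
  have hfin : Tendsto (fun n => A.mulVec (z n) + c) atTop (𝓝 c) := by
    have := ((hmvc.tendsto 0).comp hzlim).add_const c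
    simpa [Matrix.mulVec_zero] using this
  have heq : (fun n => A.mulVec (u n)) = fun n => A.mulVec (z n) + c := by
    funext n
    rw [hAz n]
    abel
  rw [heq]
  exact hfin
end

section
/- Let A, K : ℝ^N → ℝ^N with K symmetric positive definite and A invertible, and suppose στ > 0 with στν < 1 for every eigenvalue ν of A^T K^{-1} A. Then the spectral radius of the 2N×2N matrix M = [[I - 2στ A^T K^{-1} A, -σ A^T],[τ K^{-1} A, I]] is strictly less than 1. -/
open Matrix

private lemma mapC_mul {n : ℕ} (M N' : Matrix (Fin n) (Fin n) ℝ) :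
    (M * N').map Complex.ofReal = M.map Complex.ofReal * N'.map Complex.ofReal := by
  ext i j; simp [Matrix.mul_apply, Matrix.map_apply]

private lemma mapC_det {n : ℕ} (M : Matrix (Fin n) (Fin n) ℝ) :
    (M.map Complex.ofReal).det = (M.det : ℂ) := by
  exact (Complex.ofRealHom.map_det M).symm

private lemma block_det_ne {n : ℕ} (P Q R : Matrix (Fin n) (Fin n) ℂ)
    (hQ : Q.det ≠ 0) (hR : R.det ≠ 0) :
    (Matrix.fromBlocks P Q R (0 : Matrix (Fin n) (Fin n) ℂ)).det ≠ 0 := by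
  intro h
  have hms : (Matrix.fromBlocks (0 : Matrix (Fin n) (Fin n) ℂ) 1 1 0) * Matrix.fromBlocks P Q R 0
      = Matrix.fromBlocks R 0 P Q := by
    rw [Matrix.fromBlocks_multiply]; simp
  have h0 : (Matrix.fromBlocks R (0 : Matrix (Fin n) (Fin n) ℂ) P Q).det = 0 := by
    rw [← hms, det_mul, h, mul_zero]
  rw [det_fromBlocks_zero₁₂] at h0
  exact (mul_ne_zero hR hQ) h0

private lemma star_dotP {n : ℕ} (x y : Fin n → ℂ) : star (x ⬝ᵥ y) = star x ⬝ᵥ star y := by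
  simp [dotProduct]

private lemma eig_real {n : ℕ} (B₀ : Matrix (Fin n) (Fin n) ℝ) (hsym : B₀ᵀ = B₀) (μ : ℂ)
    (h : ((B₀.map Complex.ofReal) - μ • 1).det = 0) :
    ∃ ν : ℝ, (ν:ℂ) = μ ∧ ∃ v : Fin n → ℝ, v ≠ 0 ∧ B₀.mulVec v = ν • v := by
  set B := B₀.map Complex.ofReal with hBdef
  obtain ⟨w, hw0, hww⟩ := Matrix.exists_mulVec_eq_zero_iff.mpr h
  have hBw : B *ᵥ w = μ • w := by
    rwa [Matrix.sub_mulVec, Matrix.smul_mulVec, Matrix.one_mulVec, sub_eq_zero] at hww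
  have hBH : Bᴴ = B := by
    ext i j
    simp only [Matrix.conjTranspose_apply, Matrix.map_apply, hBdef, Complex.star_def,
      Complex.conj_ofReal]
    rw [show B₀ j i = B₀ i j from by conv_lhs => rw [← hsym, Matrix.transpose_apply]]
  have hz : star (star w ⬝ᵥ (B *ᵥ w)) = star w ⬝ᵥ (B *ᵥ w) := by
    rw [star_dotP, star_star, Matrix.star_mulVec, hBH, dotProduct_comm,
      Matrix.dotProduct_mulVec]
  have hzval : star w ⬝ᵥ (B *ᵥ w) = μ * (star w ⬝ᵥ w) := by
    rw [hBw, dotProduct_smul, smul_eq_mul]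
  have hnval : star w ⬝ᵥ w = ((∑ i, Complex.normSq (w i) : ℝ) : ℂ) := by
    have e : ∀ i, (starRingEnd ℂ) (w i) * w i = ((Complex.normSq (w i) : ℝ) : ℂ) := fun i => by
      rw [mul_comm, Complex.mul_conj]
    push_cast
    simp [dotProduct, Pi.star_apply, Complex.star_def, e]
  have hnpos : (0:ℝ) < ∑ i, Complex.normSq (w i) := by
    obtain ⟨i, hi⟩ := Function.ne_iff.mp hw0
    exact Finset.sum_pos' (fun j _ => Complex.normSq_nonneg _)
      ⟨i, Finset.mem_univ i, Complex.normSq_pos.mpr hi⟩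
  have hμreal : (starRingEnd ℂ) μ = μ := by
    have h1 := hz
    rw [hzval, hnval] at h1
    have h2 : (starRingEnd ℂ) μ * ((∑ i, Complex.normSq (w i) : ℝ) : ℂ)
        = μ * ((∑ i, Complex.normSq (w i) : ℝ) : ℂ) := by
      simpa [Complex.star_def, _root_.map_mul, Complex.conj_ofReal] using h1
    have hSne : (((∑ i, Complex.normSq (w i) : ℝ)) : ℂ) ≠ 0 := by
      exact_mod_cast hnpos.ne'
    exact mul_right_cancel₀ hSne h2
  have hμ : ((μ.re : ℝ) : ℂ) = μ := Complex.conj_eq_iff_re.mp hμreal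
  refine ⟨μ.re, hμ, ?_⟩
  have hmap : ((B₀ - μ.re • 1).map Complex.ofReal) = B - μ • 1 := by
    ext i j
    by_cases hij : i = j <;>
      simp [Matrix.map_apply, Matrix.sub_apply, Matrix.smul_apply, Matrix.one_apply, hij,
        hBdef, hμ]
  have hdet0 : (B₀ - μ.re • 1).det = 0 := by
    have h3 : ((B₀ - μ.re • 1).map Complex.ofReal).det = ((B₀ - μ.re • 1).det : ℂ) := by
      exact (Complex.ofRealHom.map_det (B₀ - μ.re • 1)).symm
    rw [hmap, h] at h3
    exact_mod_cast h3.symm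
  obtain ⟨v, hv0, hveq⟩ := Matrix.exists_mulVec_eq_zero_iff.mpr hdet0
  exact ⟨v, hv0, by
    rwa [Matrix.sub_mulVec, Matrix.smul_mulVec, Matrix.one_mulVec, sub_eq_zero] at hveq⟩

private lemma schur_key {n : ℕ} (P₁ P₂ : Matrix (Fin n) (Fin n) ℂ) (a b lam : ℂ) (hl : lam ≠ 1)
    (h : (Matrix.fromBlocks (((1:ℂ) - lam) • 1 - (2*a*b) • (P₁*P₂)) (-(a • P₁)) (b • P₂)
        (((1:ℂ) - lam) • 1)).det = 0) :
    ((((1:ℂ)-lam)^2) • (1 : Matrix (Fin n) (Fin n) ℂ) - ((a*b)*(1-2*lam)) • (P₁*P₂)).det = 0 := by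
  have hl' : (1:ℂ) - lam ≠ 0 := sub_ne_zero.mpr (Ne.symm hl)
  set D : Matrix (Fin n) (Fin n) ℂ := ((1:ℂ) - lam) • 1 with hD
  have hDright : D * ((((1:ℂ)-lam)⁻¹) • 1) = 1 := by
    rw [hD, Matrix.smul_mul, Matrix.mul_smul, smul_smul, Matrix.one_mul,
      mul_inv_cancel₀ hl', one_smul]
  letI : Invertible D := D.invertibleOfIsUnitDet
    (by rw [hD, det_smul, det_one, mul_one]; exact isUnit_iff_ne_zero.mpr (pow_ne_zero _ hl'))
  have hinv : ⅟D = (((1:ℂ)-lam)⁻¹) • 1 := invOf_eq_right_inv hDright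
  rw [det_fromBlocks₂₂, hinv] at h
  have hprod : (-(a • P₁)) * ((((1:ℂ)-lam)⁻¹) • 1) * (b • P₂)
      = (-(a * ((1:ℂ)-lam)⁻¹ * b)) • (P₁ * P₂) := by
    simp [Matrix.smul_mul, Matrix.mul_smul, smul_smul, mul_comm, mul_assoc, mul_left_comm]
  rw [hprod] at h
  have hDdet : D.det ≠ 0 := by
    rw [hD, det_smul, det_one, mul_one]; exact pow_ne_zero _ hl'
  have hX : ((((1:ℂ) - lam) • 1 - (2*a*b) • (P₁*P₂)) - (-(a * ((1:ℂ)-lam)⁻¹ * b)) • (P₁ * P₂)).det = 0 := by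
    rcases mul_eq_zero.mp h with h' | h'
    · exact absurd h' hDdet
    · exact h'
  have hc : ((1:ℂ)-lam) * (-(a * ((1:ℂ)-lam)⁻¹ * b)) = -(a*b) := by field_simp
  have hsc : ((((1:ℂ)-lam)^2) • (1 : Matrix (Fin n) (Fin n) ℂ) - ((a*b)*(1-2*lam)) • (P₁*P₂))
      = ((1:ℂ)-lam) • ((((1:ℂ) - lam) • 1 - (2*a*b) • (P₁*P₂)) - (-(a * ((1:ℂ)-lam)⁻¹ * b)) • (P₁ * P₂)) := by
    rw [smul_sub, smul_sub, smul_smul, smul_smul, smul_smul, hc]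
    module
  rw [hsc, det_smul, hX, mul_zero]
open Matrix

set_option maxHeartbeats 1600000 in
/-- If στν < 1 for every eigenvalue ν of AᵀK⁻¹A (A invertible, K SPD, στ > 0),
then the spectral radius of M = [[I - 2στ AᵀK⁻¹A, -σAᵀ],[τK⁻¹A, I]] is < 1:
every complex eigenvalue λ of M satisfies |λ| < 1. -/
theorem stmt_3 {N : ℕ} (A K : Matrix (Fin N) (Fin N) ℝ)
    (hA : IsUnit A.det) (hK : K.PosDef) (σ τ : ℝ) (hστ : 0 < σ * τ)
    (heig : ∀ ν : ℝ, (∃ v : Fin N → ℝ, v ≠ 0 ∧ (Aᵀ * K⁻¹ * A).mulVec v = ν • v) →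
      σ * τ * ν < 1) :
    let M : Matrix (Fin N ⊕ Fin N) (Fin N ⊕ Fin N) ℝ :=
      Matrix.fromBlocks (1 - (2 * σ * τ) • (Aᵀ * K⁻¹ * A)) (-(σ • Aᵀ)) (τ • (K⁻¹ * A)) 1
    ∀ lam : ℂ, ((M.map Complex.ofReal) - lam • 1).det = 0 → ‖lam‖ < 1 := by
  intro M lam hdet
  have hM : M = Matrix.fromBlocks (1 - (2 * σ * τ) • (Aᵀ * K⁻¹ * A)) (-(σ • Aᵀ))
      (τ • (K⁻¹ * A)) 1 := rfl
  rw [hM] at hdet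
  have hσ : σ ≠ 0 := left_ne_zero_of_mul hστ.ne'
  have hτ : τ ≠ 0 := right_ne_zero_of_mul hστ.ne'
  have hdetA : A.det ≠ 0 := hA.ne_zero
  have hKinv : (K⁻¹).PosDef := hK.inv
  have hMap : ((Matrix.fromBlocks (1 - (2 * σ * τ) • (Aᵀ * K⁻¹ * A)) (-(σ • Aᵀ))
        (τ • (K⁻¹ * A)) 1).map Complex.ofReal) - lam • 1 =
      Matrix.fromBlocks
        (((1:ℂ) - lam) • 1 - ((2*σ*τ : ℝ) : ℂ) • ((Aᵀ * K⁻¹ * A).map Complex.ofReal))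
        (-((σ:ℂ) • (Aᵀ.map Complex.ofReal))) ((τ:ℂ) • ((K⁻¹ * A).map Complex.ofReal))
        (((1:ℂ) - lam) • 1) := by
    ext i j
    rcases i with i | i <;> rcases j with j | j <;>
      simp [Matrix.fromBlocks, Matrix.one_apply, Matrix.sub_apply, Matrix.smul_apply,
        Matrix.map_apply, Matrix.neg_apply, apply_ite Complex.ofReal, smul_eq_mul] <;>
      split_ifs <;> push_cast <;> ring
  rw [hMap] at hdet
  by_cases hl : lam = 1
  · exfalso
    rw [hl] at hdet
    have hdet' : (Matrix.fromBlocks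
        (((1:ℂ) - 1) • 1 - ((2*σ*τ : ℝ) : ℂ) • ((Aᵀ * K⁻¹ * A).map Complex.ofReal))
        (-((σ:ℂ) • (Aᵀ.map Complex.ofReal))) ((τ:ℂ) • ((K⁻¹ * A).map Complex.ofReal))
        (0 : Matrix (Fin N) (Fin N) ℂ)).det = 0 := by
      rw [show ((1:ℂ) - 1) • (1 : Matrix (Fin N) (Fin N) ℂ) = 0 by simp] at hdet ⊢
      exact hdet
    refine block_det_ne _ _ _ ?_ ?_ hdet'
    · rw [det_neg, det_smul, mapC_det]
      refine mul_ne_zero (by simp) (mul_ne_zero (pow_ne_zero _ ?_) ?_)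
      · exact_mod_cast hσ
      · rw [det_transpose]; exact_mod_cast hdetA
    · rw [det_smul, mapC_det]
      refine mul_ne_zero (pow_ne_zero _ (by exact_mod_cast hτ)) ?_
      rw [det_mul]
      exact_mod_cast mul_ne_zero hKinv.det_pos.ne' hdetA
  · -- main case
    have hmul : (Aᵀ * K⁻¹ * A).map Complex.ofReal
        = (Aᵀ.map Complex.ofReal) * ((K⁻¹ * A).map Complex.ofReal) := by
      rw [Matrix.mul_assoc, mapC_mul]
    have hcast : ((2*σ*τ : ℝ) : ℂ) = 2*(σ:ℂ)*(τ:ℂ) := by push_cast; ring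
    rw [hcast, hmul] at hdet
    have hkey := schur_key (Aᵀ.map Complex.ofReal) ((K⁻¹ * A).map Complex.ofReal)
      (σ:ℂ) (τ:ℂ) lam hl hdet
    rw [← hmul] at hkey
    have hl' : (1:ℂ) - lam ≠ 0 := sub_ne_zero.mpr (Ne.symm hl)
    have hc : ((1:ℂ)-lam)^2 ≠ 0 := pow_ne_zero _ hl'
    by_cases hd : ((σ:ℂ)*(τ:ℂ))*(1-2*lam) = 0
    · exfalso
      rw [hd, zero_smul, sub_zero, det_smul, det_one, mul_one] at hkey
      exact pow_ne_zero _ hc hkey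
    · have hdc : (-(((σ:ℂ)*(τ:ℂ))*(1-2*lam))) * ((((1:ℂ)-lam)^2) / (((σ:ℂ)*(τ:ℂ))*(1-2*lam)))
          = -(((1:ℂ)-lam)^2) := by rw [neg_mul, mul_div_assoc', mul_div_cancel_left₀ _ hd]
      have htrans : (((1:ℂ)-lam)^2) • (1 : Matrix (Fin N) (Fin N) ℂ)
            - (((σ:ℂ)*(τ:ℂ))*(1-2*lam)) • ((Aᵀ * K⁻¹ * A).map Complex.ofReal)
          = (-(((σ:ℂ)*(τ:ℂ))*(1-2*lam))) • (((Aᵀ * K⁻¹ * A).map Complex.ofReal)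
            - ((((1:ℂ)-lam)^2) / (((σ:ℂ)*(τ:ℂ))*(1-2*lam))) • 1) := by
        rw [smul_sub, smul_smul, hdc]
        module
      rw [htrans, det_smul] at hkey
      have hdetBμ : (((Aᵀ * K⁻¹ * A).map Complex.ofReal)
          - ((((1:ℂ)-lam)^2) / (((σ:ℂ)*(τ:ℂ))*(1-2*lam))) • 1).det = 0 := by
        rcases mul_eq_zero.mp hkey with h' | h'
        · exact absurd h' (pow_ne_zero _ (neg_ne_zero.mpr hd))
        · exact h'
      have hKT : Kᵀ = K := by
        rw [← Matrix.conjTranspose_eq_transpose_of_trivial]; exact hK.1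
      have hsym : (Aᵀ * K⁻¹ * A)ᵀ = Aᵀ * K⁻¹ * A := by
        rw [transpose_mul, transpose_mul, transpose_transpose, transpose_nonsing_inv, hKT,
          ← Matrix.mul_assoc]
      obtain ⟨ν, hν, v, hv0, hvB⟩ := eig_real (Aᵀ * K⁻¹ * A) hsym _ hdetBμ
      have hlt : σ * τ * ν < 1 := heig ν ⟨v, hv0, hvB⟩
      -- ν > 0
      have h1 : v ⬝ᵥ ((Aᵀ * K⁻¹ * A) *ᵥ v) = ν * (v ⬝ᵥ v) := by
        rw [hvB, dotProduct_smul, smul_eq_mul]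
      have h2 : v ⬝ᵥ ((Aᵀ * K⁻¹ * A) *ᵥ v) = (A *ᵥ v) ⬝ᵥ (K⁻¹ *ᵥ (A *ᵥ v)) := by
        rw [← Matrix.mulVec_mulVec, ← Matrix.mulVec_mulVec, Matrix.dotProduct_mulVec,
          Matrix.vecMul_transpose]
      have hAv : A *ᵥ v ≠ 0 := by
        intro h0
        apply hv0
        have h5 : A⁻¹ *ᵥ (A *ᵥ v) = 0 := by rw [h0, Matrix.mulVec_zero]
        rwa [Matrix.mulVec_mulVec, Matrix.nonsing_inv_mul A hA, Matrix.one_mulVec] at h5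
      have h3 : 0 < (A *ᵥ v) ⬝ᵥ (K⁻¹ *ᵥ (A *ᵥ v)) := by
        have := hKinv.dotProduct_mulVec_pos hAv
        simpa using this
      have h4 : 0 < v ⬝ᵥ v := by
        obtain ⟨i, hi⟩ := Function.ne_iff.mp hv0
        simp only [dotProduct]
        exact Finset.sum_pos' (fun j _ => mul_self_nonneg _)
          ⟨i, Finset.mem_univ i, mul_self_pos.mpr hi⟩
      have hν0 : 0 < ν := by nlinarith [h1, h2, h3, h4]
      -- quadratic relation
      have hcd : (ν:ℂ) * (((σ:ℂ)*(τ:ℂ))*(1-2*lam)) = ((1:ℂ)-lam)^2 :=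
        (eq_div_iff hd).mp hν
      have hquad : ((1:ℂ) - lam)^2 = ((σ*τ*ν : ℝ):ℂ) * (1 - 2*lam) := by
        rw [← hcd]; push_cast; ring
      have hT0 : 0 < σ*τ*ν := mul_pos hστ hν0
      have h5 : (lam - ((1 - σ*τ*ν : ℝ) : ℂ))^2 = ((-((1 - σ*τ*ν) * (σ*τ*ν)) : ℝ) : ℂ) := by
        push_cast at hquad ⊢
        linear_combination hquad
      have e1 : (lam.re - (1 - σ*τ*ν)) * (lam.re - (1 - σ*τ*ν)) - lam.im * lam.im
          = -((1 - σ*τ*ν) * (σ*τ*ν)) := by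
        have := congrArg Complex.re h5
        simpa [pow_two, Complex.mul_re, Complex.sub_re, Complex.sub_im] using this
      have e2 : (lam.re - (1 - σ*τ*ν)) * lam.im + lam.im * (lam.re - (1 - σ*τ*ν)) = 0 := by
        have := congrArg Complex.im h5
        simpa [pow_two, Complex.mul_im, Complex.sub_re, Complex.sub_im] using this
      have habs : ‖lam‖^2 = lam.re*lam.re + lam.im*lam.im := by
        rw [Complex.sq_norm, Complex.normSq_apply]
      have hcase : (lam.re - (1 - σ*τ*ν)) * lam.im = 0 := by nlinarith [e2]
      rcases mul_eq_zero.mp hcase with h | h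
      · have hre : lam.re = 1 - σ*τ*ν := by linarith [sub_eq_zero.mp h]
        have hy2 : lam.im * lam.im = (1 - σ*τ*ν) * (σ*τ*ν) := by nlinarith [e1]
        have habs2 : ‖lam‖^2 = 1 - σ*τ*ν := by rw [habs, hre]; linear_combination hy2
        nlinarith [norm_nonneg lam, habs2, hT0]
      · exfalso
        nlinarith [e1, h, hT0, hlt]
end
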